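/- Let E be a separable Banach space, l>0, and let W ⊂ L¹([0,l],E) be countable and integrably bounded, i.e. there exists c∈L¹([0,l],ℝ) with ‖w(t)‖ ≤ c(t) for all w∈W and almost every t∈[0,l]. Define φ : [0,l] → ℝ by φ(t) := β({w(t) : w∈W}), where β is the Hausdorff measure of noncompactness. Then φ ∈ L¹([0,l],ℝ) and β({∫₀^l w(τ) dτ : w∈W}) ≤ ∫₀^l φ(τ) dτ. -/

import Mathlib

open MeasureTheory Filter Set Topology

/-- The Hausdorff measure of noncompactness of a subset of a normed space. -/
noncomputable def hausdorffMNC {E : Type*} [SeminormedAddCommGroup E] (Q : Set E) : ℝ :=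
  sInf {r : ℝ | 0 < r ∧ ∃ C : Finset E, Q ⊆ ⋃ c ∈ C, Metric.ball c r}

open Metric
open scoped NNReal ENNReal

lemma hausdorffMNC_nonneg {E : Type*} [SeminormedAddCommGroup E] (Q : Set E) :
    0 ≤ hausdorffMNC Q :=
  Real.sInf_nonneg (fun _ hx => le_of_lt hx.1)

lemma hausdorffMNC_bddBelow {E : Type*} [SeminormedAddCommGroup E] (Q : Set E) :
    BddBelow {r : ℝ | 0 < r ∧ ∃ C : Finset E, Q ⊆ ⋃ c ∈ C, Metric.ball c r} :=
  ⟨0, fun _ hx => le_of_lt hx.1⟩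

lemma hausdorffMNC_empty {E : Type*} [SeminormedAddCommGroup E] :
    hausdorffMNC (∅ : Set E) = 0 := by
  have : {r : ℝ | 0 < r ∧ ∃ C : Finset E, (∅ : Set E) ⊆ ⋃ c ∈ C, Metric.ball c r} = Ioi 0 := by
    ext r; simp [mem_Ioi]
  rw [hausdorffMNC, this, csInf_Ioi]

/-- If for every `ε > 0` the set is covered by finitely many balls of radius `a + ε`,
then the MNC is at most `a`. -/
lemma hausdorffMNC_le {E : Type*} [SeminormedAddCommGroup E] {Q : Set E} {a : ℝ}
    (ha : 0 ≤ a) (h : ∀ ε > 0, ∃ C : Finset E, Q ⊆ ⋃ c ∈ C, Metric.ball c (a + ε)) :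
    hausdorffMNC Q ≤ a := by
  have : ∀ ε > 0, hausdorffMNC Q ≤ a + ε := by
    intro ε hε
    obtain ⟨C, hC⟩ := h ε hε
    exact csInf_le (hausdorffMNC_bddBelow Q) ⟨by linarith, C, hC⟩
  exact le_of_forall_pos_le_add this

open ENNReal in
/-- For a bounded countable set in a space with a dense sequence, the MNC equals an
inf-sup-inf formula over the dense sequence. -/
lemma mnc_eq_formula {E : Type*} [SeminormedAddCommGroup E] (D : ℕ → E) (hD : DenseRange D)
    (g : ℕ → E) (M : ℝ) (hM : ∀ n, ‖g n‖ ≤ M) :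
    hausdorffMNC (Set.range g) =
      (⨅ F : Finset ℕ, ⨆ n, ⨅ k ∈ F, (‖g n - D k‖₊ : ℝ≥0∞)).toReal := by
  have hM0 : 0 ≤ M := le_trans (norm_nonneg _) (hM 0)
  set ψ : ℝ≥0∞ := ⨅ F : Finset ℕ, ⨆ n, ⨅ k ∈ F, (‖g n - D k‖₊ : ℝ≥0∞) with hψ
  have hψtop : ψ ≠ ⊤ := by
    have h1 : ψ ≤ ⨆ n, ⨅ k ∈ ({0} : Finset ℕ), (‖g n - D k‖₊ : ℝ≥0∞) := iInf_le _ _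
    have h2 : (⨆ n, ⨅ k ∈ ({0} : Finset ℕ), (‖g n - D k‖₊ : ℝ≥0∞)) ≤
        ENNReal.ofReal (M + ‖D 0‖) := by
      refine iSup_le fun n => ?_
      refine le_trans (iInf₂_le 0 (Finset.mem_singleton_self 0)) ?_
      rw [← ENNReal.ofReal_coe_nnreal, coe_nnnorm]
      exact ENNReal.ofReal_le_ofReal
        (le_trans (norm_sub_le _ _) (by linarith [hM n]))
    exact ne_top_of_le_ne_top ENNReal.ofReal_ne_top (h1.trans h2)
  have hβ0 := hausdorffMNC_nonneg (Set.range g)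
  classical
  apply le_antisymm
  · -- β ≤ ψ.toReal
    refine hausdorffMNC_le ENNReal.toReal_nonneg (fun ε hε => ?_)
    have hlt : ψ < ψ + ENNReal.ofReal ε := by
      exact ENNReal.lt_add_right hψtop (ENNReal.ofReal_pos.mpr hε).ne'
    obtain ⟨F, hF⟩ := iInf_lt_iff.mp hlt
    refine ⟨F.image D, fun x hx => ?_⟩
    obtain ⟨n, rfl⟩ := hx
    have hn : (⨅ k ∈ F, (‖g n - D k‖₊ : ℝ≥0∞)) < ψ + ENNReal.ofReal ε :=
      lt_of_le_of_lt (le_iSup (fun n => ⨅ k ∈ F, (‖g n - D k‖₊ : ℝ≥0∞)) n) hF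
    obtain ⟨k, hk⟩ := iInf_lt_iff.mp hn
    by_cases hkF : k ∈ F
    swap
    · simp [hkF] at hk
    simp only [hkF, iInf_pos] at hk
    have : ‖g n - D k‖ < ψ.toReal + ε := by
      have := hk
      rw [← ENNReal.ofReal_coe_nnreal, coe_nnnorm, ← ENNReal.ofReal_toReal hψtop,
        ← ENNReal.ofReal_add ENNReal.toReal_nonneg hε.le] at this
      exact (ENNReal.ofReal_lt_ofReal_iff_of_nonneg (norm_nonneg _)).mp this
    exact Set.mem_biUnion (Finset.mem_coe.mpr (Finset.mem_image_of_mem D hkF))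
      (by simpa [Metric.mem_ball, dist_eq_norm] using this)
  · -- ψ.toReal ≤ β
    refine le_of_forall_pos_le_add (fun ε hε => ?_)
    have hne : ({r : ℝ | 0 < r ∧ ∃ C : Finset E,
        Set.range g ⊆ ⋃ c ∈ C, Metric.ball c r}).Nonempty := by
      refine ⟨M + 1, by linarith, {0}, fun x hx => ?_⟩
      obtain ⟨n, rfl⟩ := hx
      simp only [Finset.mem_singleton, Set.iUnion_iUnion_eq_left, Metric.mem_ball,
        dist_eq_norm, sub_zero]
      have := hM n; linarith
    have hlt : hausdorffMNC (Set.range g) < hausdorffMNC (Set.range g) + ε / 2 := by linarith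
    obtain ⟨r, ⟨hr0, C, hC⟩, hrlt⟩ := exists_lt_of_csInf_lt hne hlt
    -- move centers to the dense sequence
    have hch : ∀ x : E, ∃ k : ℕ, dist x (D k) < ε / 2 := fun x =>
      hD.exists_dist_lt x (by linarith)
    choose sel hsel using hch
    set F : Finset ℕ := C.image sel with hF
    have hψle : ψ ≤ ENNReal.ofReal (hausdorffMNC (Set.range g) + ε) := by
      refine le_trans (iInf_le _ F) (iSup_le fun n => ?_)
      have hx : g n ∈ ⋃ c ∈ C, Metric.ball c r := hC (Set.mem_range_self n)
      obtain ⟨x, hxC, hxball⟩ := Set.mem_iUnion₂.mp hx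
      have hkF : sel x ∈ F := Finset.mem_image_of_mem sel hxC
      refine le_trans (iInf₂_le (sel x) hkF) ?_
      rw [← ENNReal.ofReal_coe_nnreal, coe_nnnorm]
      refine ENNReal.ofReal_le_ofReal ?_
      have h1 : ‖g n - x‖ < r := by
        simpa [Metric.mem_ball, dist_eq_norm] using hxball
      have h2 : dist x (D (sel x)) < ε / 2 := hsel x
      have h3 : ‖g n - D (sel x)‖ ≤ ‖g n - x‖ + ‖x - D (sel x)‖ := norm_sub_le_norm_sub_add_norm_sub _ _ _
      rw [dist_eq_norm] at h2
      linarith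
    calc ψ.toReal ≤ (ENNReal.ofReal (hausdorffMNC (Set.range g) + ε)).toReal :=
          ENNReal.toReal_mono ENNReal.ofReal_ne_top hψle
      _ = hausdorffMNC (Set.range g) + ε := ENNReal.toReal_ofReal (by linarith)

lemma hausdorffMNC_le_of_norm_le {E : Type*} [SeminormedAddCommGroup E] {Q : Set E} {M : ℝ}
    (hM : 0 ≤ M) (h : ∀ x ∈ Q, ‖x‖ ≤ M) : hausdorffMNC Q ≤ M := by
  refine hausdorffMNC_le hM (fun ε hε => ⟨{0}, fun x hx => ?_⟩)
  simp only [Finset.mem_singleton, Set.iUnion_iUnion_eq_left, Metric.mem_ball,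
    dist_eq_norm, sub_zero]
  have := h x hx; linarith

lemma formula_measurable {E : Type*} [NormedAddCommGroup E] (D : ℕ → E)
    (g : ℕ → ℝ → E) (hg : ∀ n, StronglyMeasurable (g n)) :
    Measurable (fun t => (⨅ F : Finset ℕ, ⨆ n, ⨅ k ∈ F,
      (‖g n t - D k‖₊ : ℝ≥0∞)).toReal) := by
  refine ENNReal.measurable_toReal.comp ?_
  refine Measurable.iInf (fun F => Measurable.iSup (fun n => Measurable.iInf (fun k => Measurable.iInf (fun _ => ?_))))
  exact measurable_coe_nnreal_ennreal.comp ((hg n).sub stronglyMeasurable_const).nnnorm.measurable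

/-- From a dense sequence one can extract a finite `(β + δ)`-net indexed in the sequence. -/
lemma exists_net {E : Type*} [SeminormedAddCommGroup E] (D : ℕ → E) (hD : DenseRange D)
    (g : ℕ → E) (M : ℝ) (hM : ∀ n, ‖g n‖ ≤ M) {δ : ℝ} (hδ : 0 < δ) :
    ∃ F : Finset ℕ, ∀ n, ∃ k ∈ F, ‖g n - D k‖ < hausdorffMNC (Set.range g) + δ := by
  classical
  have hM0 : 0 ≤ M := le_trans (norm_nonneg _) (hM 0)
  set β := hausdorffMNC (Set.range g) with hβ
  have hne : ({r : ℝ | 0 < r ∧ ∃ C : Finset E,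
      Set.range g ⊆ ⋃ c ∈ C, Metric.ball c r}).Nonempty := by
    refine ⟨M + 1, by linarith, {0}, fun x hx => ?_⟩
    obtain ⟨n, rfl⟩ := hx
    simp only [Finset.mem_singleton, Set.iUnion_iUnion_eq_left, Metric.mem_ball,
      dist_eq_norm, sub_zero]
    have := hM n; linarith
  have hlt : β < β + δ / 2 := by linarith
  obtain ⟨r, ⟨hr0, C, hC⟩, hrlt⟩ := exists_lt_of_csInf_lt hne hlt
  have hch : ∀ x : E, ∃ k : ℕ, dist x (D k) < δ / 2 := fun x =>
    hD.exists_dist_lt x (by linarith)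
  choose sel hsel using hch
  refine ⟨C.image sel, fun n => ?_⟩
  have hx : g n ∈ ⋃ c ∈ C, Metric.ball c r := hC (Set.mem_range_self n)
  obtain ⟨x, hxC, hxball⟩ := Set.mem_iUnion₂.mp hx
  refine ⟨sel x, Finset.mem_image_of_mem sel hxC, ?_⟩
  have h1 : ‖g n - x‖ < r := by simpa [Metric.mem_ball, dist_eq_norm] using hxball
  have h2 : ‖x - D (sel x)‖ < δ / 2 := by
    have := hsel x; rwa [dist_eq_norm] at this
  have h3 : ‖g n - D (sel x)‖ ≤ ‖g n - x‖ + ‖x - D (sel x)‖ :=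
    norm_sub_le_norm_sub_add_norm_sub _ _ _
  linarith

/-- Lemma 2.5 (Deimling): for a countable, integrably bounded family
`W ⊂ L¹([0,l],E)` on a separable Banach space, `t ↦ β({w(t) : w ∈ W})` is integrable and
`β({∫₀ˡ w : w ∈ W}) ≤ ∫₀ˡ β({w(τ) : w ∈ W}) dτ`. -/
theorem mnc_integral_estimate
    {E : Type*} [NormedAddCommGroup E] [NormedSpace ℝ E] [CompleteSpace E]
    [TopologicalSpace.SeparableSpace E]
    (l : ℝ) (hl : 0 < l)
    (W : Set (ℝ → E)) (hWc : W.Countable)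
    (hWint : ∀ w ∈ W, IntervalIntegrable w volume 0 l)
    (c : ℝ → ℝ) (hcint : IntervalIntegrable c volume 0 l)
    (hdom : ∀ w ∈ W, ∀ᵐ t ∂(volume.restrict (Set.Icc (0:ℝ) l)), ‖w t‖ ≤ c t) :
    IntervalIntegrable (fun t => hausdorffMNC {x : E | ∃ w ∈ W, x = w t}) volume 0 l ∧
    hausdorffMNC {x : E | ∃ w ∈ W, x = ∫ τ in (0:ℝ)..l, w τ} ≤
      ∫ τ in (0:ℝ)..l, hausdorffMNC {x : E | ∃ w ∈ W, x = w τ} := by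
  classical
  rcases W.eq_empty_or_nonempty with hW | hW
  · -- degenerate case `W = ∅`
    subst hW
    have hset : ∀ s : ℝ → E, {x : E | ∃ w ∈ (∅ : Set (ℝ → E)), x = s 0} = (∅ : Set E) := by
      simp
    constructor
    · have : (fun t => hausdorffMNC {x : E | ∃ w ∈ (∅ : Set (ℝ → E)), x = w t})
          = fun _ => (0:ℝ) := by
        funext t; simp [hausdorffMNC_empty]
      rw [this]; exact intervalIntegrable_const
    · simp [hausdorffMNC_empty, hausdorffMNC_nonneg, intervalIntegral.integral_nonneg hl.le]
  · obtain ⟨w, hWr⟩ := hWc.exists_eq_range hW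
    set μ : Measure ℝ := volume.restrict (Ioc 0 l) with hμ
    haveI : IsFiniteMeasure μ := by
      constructor
      rw [hμ, Measure.restrict_apply_univ]
      exact measure_Ioc_lt_top
    have hμIcc : volume.restrict (Icc (0:ℝ) l) = μ :=
      (Measure.restrict_congr_set Ioc_ae_eq_Icc).symm
    have hμuniv : (μ Set.univ).toReal = l := by
      rw [hμ, Measure.restrict_apply_univ, Real.volume_Ioc]
      simp [hl.le]
    have hwW : ∀ n, w n ∈ W := fun n => by rw [hWr]; exact Set.mem_range_self n
    have hint : ∀ n, Integrable (w n) μ := fun n =>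
      (intervalIntegrable_iff_integrableOn_Ioc_of_le hl.le).mp (hWint _ (hwW n))
    have hcintμ : Integrable c μ :=
      (intervalIntegrable_iff_integrableOn_Ioc_of_le hl.le).mp hcint
    have hmeas : ∀ n, AEStronglyMeasurable (w n) μ := fun n => (hint n).1
    set g : ℕ → ℝ → E := fun n => (hmeas n).mk (w n) with hg
    have hgmeas : ∀ n, StronglyMeasurable (g n) := fun n => (hmeas n).stronglyMeasurable_mk
    have hgae : ∀ n, w n =ᵐ[μ] g n := fun n => (hmeas n).ae_eq_mk
    have hgint : ∀ n, Integrable (g n) μ := fun n => (hint n).congr (hgae n)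
    have hdomμ : ∀ᵐ t ∂μ, ∀ n, ‖w n t‖ ≤ c t := by
      rw [ae_all_iff]
      intro n
      have := hdom (w n) (hwW n)
      rwa [hμIcc] at this
    have hgood : ∀ᵐ t ∂μ, (∀ n, ‖g n t‖ ≤ c t) ∧ (∀ n, w n t = g n t) := by
      have h2 : ∀ᵐ t ∂μ, ∀ n, w n t = g n t := ae_all_iff.mpr hgae
      filter_upwards [hdomμ, h2] with t h1 h2
      exact ⟨fun n => h2 n ▸ h1 n, h2⟩
    haveI : Nonempty E := ⟨0⟩
    obtain ⟨D, hD⟩ := TopologicalSpace.exists_dense_seq E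
    set h : ℝ → ℝ := fun t => (⨅ F : Finset ℕ, ⨆ n, ⨅ k ∈ F,
      (‖g n t - D k‖₊ : ℝ≥0∞)).toReal with hh
    have hhmeas : Measurable h := formula_measurable D g hgmeas
    have hh0 : ∀ t, 0 ≤ h t := fun t => ENNReal.toReal_nonneg
    set φ : ℝ → ℝ := fun t => hausdorffMNC {x : E | ∃ v ∈ W, x = v t} with hφ
    have hsetS : ∀ t : ℝ, {x : E | ∃ v ∈ W, x = v t} = Set.range (fun n => w n t) := by
      intro t; ext x
      simp only [hWr, Set.mem_setOf_eq, Set.mem_range]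
      constructor
      · rintro ⟨v, ⟨n, rfl⟩, rfl⟩; exact ⟨n, rfl⟩
      · rintro ⟨n, rfl⟩; exact ⟨w n, ⟨n, rfl⟩, rfl⟩
    have hφeq : φ =ᶠ[ae μ] h := by
      filter_upwards [hgood] with t ⟨h1, h2⟩
      have heq : (fun n => w n t) = fun n => g n t := funext h2
      show hausdorffMNC {x : E | ∃ v ∈ W, x = v t} = h t
      rw [hsetS t, heq, mnc_eq_formula D hD (fun n => g n t) (c t) h1]
    have hφb : ∀ᵐ t ∂μ, ‖φ t‖ ≤ c t := by
      filter_upwards [hdomμ] with t h1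
      rw [Real.norm_eq_abs, abs_of_nonneg (hausdorffMNC_nonneg _)]
      show hausdorffMNC {x : E | ∃ v ∈ W, x = v t} ≤ c t
      rw [hsetS t]
      refine hausdorffMNC_le_of_norm_le (le_trans (norm_nonneg _) (h1 0)) ?_
      rintro x ⟨n, rfl⟩; exact h1 n
    have hφint : Integrable φ μ :=
      Integrable.mono' hcintμ (hhmeas.aestronglyMeasurable.congr hφeq.symm) hφb
    have hhint : Integrable h μ := hφint.congr hφeq
    set I : ℝ := ∫ t, h t ∂μ with hI
    have hI0 : 0 ≤ I := integral_nonneg hh0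
    have hRHS : (∫ τ in (0:ℝ)..l, φ τ) = I := by
      rw [intervalIntegral.integral_of_le hl.le]
      exact integral_congr_ae hφeq
    have hsetR : {x : E | ∃ v ∈ W, x = ∫ τ in (0:ℝ)..l, v τ}
        = Set.range (fun n => ∫ t, g n t ∂μ) := by
      ext x
      simp only [hWr, Set.mem_setOf_eq, Set.mem_range]
      have key : ∀ n, (∫ τ in (0:ℝ)..l, w n τ) = ∫ t, g n t ∂μ := fun n => by
        rw [intervalIntegral.integral_of_le hl.le]
        exact integral_congr_ae (hgae n)
      constructor
      · rintro ⟨v, ⟨n, rfl⟩, rfl⟩; exact ⟨n, (key n).symm⟩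
      · rintro ⟨n, rfl⟩; exact ⟨w n, ⟨n, rfl⟩, (key n).symm⟩
    refine ⟨(intervalIntegrable_iff_integrableOn_Ioc_of_le hl.le).mpr hφint, ?_⟩
    rw [hRHS, hsetR]
    -- main estimate
    refine hausdorffMNC_le hI0 (fun ε hε => ?_)
    set δ : ℝ := ε / (l + 2) with hδdef
    have hδ : 0 < δ := div_pos hε (by linarith)
    have hδε : δ * (l + 2) = ε := div_mul_cancel₀ ε (by linarith)
    -- a measurable full-measure set of good points
    obtain ⟨N, hN1, hN2, hN3⟩ := exists_measurable_superset_of_null (ae_iff.mp hgood)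
    set T : Set ℝ := Nᶜ with hT
    have hTmeas : MeasurableSet T := hN2.compl
    have hTc : μ Tᶜ = 0 := by rw [hT, compl_compl]; exact hN3
    have hTprop : ∀ t ∈ T, (∀ n, ‖g n t‖ ≤ c t) ∧ (∀ n, w n t = g n t) := by
      intro t ht
      by_contra hcon
      exact ht (hN1 hcon)
    have heqT : ∀ t ∈ T, h t = hausdorffMNC (Set.range fun n => g n t) := fun t ht =>
      mnc_eq_formula D hD (fun n => g n t) (c t) (hTprop t ht).1 ▸ rfl
    obtain ⟨e, he⟩ := exists_surjective_nat (Finset ℕ)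
    set U : ℕ → ℕ → Set ℝ := fun n k => {t | ‖g n t - D k‖ < h t + δ} with hU
    have hUmeas : ∀ n k, MeasurableSet (U n k) := fun n k =>
      measurableSet_lt (((hgmeas n).sub stronglyMeasurable_const).norm.measurable)
        (hhmeas.add measurable_const)
    set P : ℕ → Set ℝ := fun m => ⋂ n, ⋃ k ∈ e m, U n k with hP
    have hPmeas : ∀ m, MeasurableSet (P m) := fun m =>
      MeasurableSet.iInter fun n => (e m).measurableSet_biUnion (fun k _ => hUmeas n k)
    have hTP : ∀ t ∈ T, ∃ m, t ∈ P m := by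
      intro t ht
      obtain ⟨F, hF⟩ := exists_net D hD (fun n => g n t) (c t) (hTprop t ht).1 hδ
      obtain ⟨m, rfl⟩ := he F
      refine ⟨m, Set.mem_iInter.mpr fun n => ?_⟩
      obtain ⟨k, hk1, hk2⟩ := hF n
      refine Set.mem_biUnion hk1 ?_
      show ‖g n t - D k‖ < h t + δ
      rw [heqT t ht]
      exact hk2
    set BB : ℕ → Set ℝ := fun M => T ∩ ⋃ m ∈ Finset.range (M+1), P m with hBB
    have hBBmeas : ∀ M, MeasurableSet (BB M) := fun M =>
      hTmeas.inter ((Finset.range (M+1)).measurableSet_biUnion fun m _ => hPmeas m)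
    have hBBmono : Monotone BB := by
      intro a b hab
      refine Set.inter_subset_inter_right _ ?_
      refine Set.biUnion_subset_biUnion_left ?_
      exact Finset.coe_subset.mpr (Finset.range_subset_range.mpr (by omega))
    have hBBunion : (⋃ M, BB M) = T := by
      apply Set.Subset.antisymm
      · exact Set.iUnion_subset fun M => Set.inter_subset_left
      · intro t ht
        obtain ⟨m, hm⟩ := hTP t ht
        exact Set.mem_iUnion.mpr ⟨m, ht,
          Set.mem_biUnion (Finset.self_mem_range_succ m) hm⟩
    have htend : Tendsto (fun M => ∫ t in BB M, c t ∂μ) atTop (𝓝 (∫ t, c t ∂μ)) := by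
      have h1 := tendsto_setIntegral_of_monotone hBBmeas hBBmono
        (hcintμ.integrableOn : IntegrableOn c (⋃ M, BB M) μ)
      rw [hBBunion] at h1
      have h2 : (∫ t in T, c t ∂μ) = ∫ t, c t ∂μ := by
        rw [Measure.restrict_congr_set (ae_eq_univ.mpr hTc), Measure.restrict_univ]
      rwa [h2] at h1
    obtain ⟨M, hM⟩ := (htend.eventually (eventually_gt_nhds
      (sub_lt_self _ hδ))).exists
    set B : Set ℝ := BB M with hB
    have hBmeas : MeasurableSet B := hBBmeas M
    have hcompl : (∫ t in Bᶜ, c t ∂μ) < δ := by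
      have hsplit := integral_add_compl hBmeas hcintμ
      have : (∫ t, c t ∂μ) - δ < ∫ t in B, c t ∂μ := hM
      linarith
    set G : Finset ℕ := (Finset.range (M+1)).biUnion e with hG
    have hBnet : ∀ t ∈ B, ∀ n, ∃ k ∈ G, t ∈ U n k := by
      intro t ht n
      obtain ⟨-, htU⟩ := ht
      obtain ⟨m, hm1, hm2⟩ := Set.mem_iUnion₂.mp htU
      have h3 := Set.mem_iInter.mp hm2 n
      obtain ⟨k, hk1, hk2⟩ := Set.mem_iUnion₂.mp h3
      exact ⟨k, Finset.mem_biUnion.mpr ⟨m, hm1, hk1⟩, hk2⟩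
    set S : ℕ → ℕ → Set ℝ := fun n k =>
      (B ∩ U n k) \ ⋃ j ∈ G.filter (· < k), U n j with hS
    have hSmeas : ∀ n k, MeasurableSet (S n k) := fun n k =>
      ((hBmeas.inter (hUmeas n k)).diff
        ((G.filter (· < k)).measurableSet_biUnion fun j _ => hUmeas n j))
    have hSsubU : ∀ n k, S n k ⊆ U n k := fun n k t ht => ht.1.2
    have hSsubB : ∀ n k, S n k ⊆ B := fun n k t ht => ht.1.1
    have hSdisj : ∀ n, (↑G : Set ℕ).Pairwise (Function.onFun Disjoint (S n)) := by
      intro n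
      have key : ∀ k k', k ∈ G → k < k' → Disjoint (S n k) (S n k') := by
        intro k k' hk hlt
        refine Set.disjoint_left.mpr ?_
        rintro t ⟨⟨-, htU⟩, -⟩ ⟨-, htnot⟩
        exact htnot (Set.mem_biUnion (Finset.mem_filter.mpr ⟨hk, hlt⟩) htU)
      intro k hk k' hk' hne
      rcases lt_or_gt_of_ne hne with hlt | hlt
      · exact key k k' (Finset.mem_coe.mp hk) hlt
      · exact (key k' k (Finset.mem_coe.mp hk') hlt).symm
    have hScover : ∀ n, B = ⋃ k ∈ G, S n k := by
      intro n
      apply Set.Subset.antisymm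
      · intro t ht
        have hne' : (G.filter (fun k => t ∈ U n k)).Nonempty := by
          obtain ⟨k, hk1, hk2⟩ := hBnet t ht n
          exact ⟨k, Finset.mem_filter.mpr ⟨hk1, hk2⟩⟩
        set k₀ := (G.filter (fun k => t ∈ U n k)).min' hne' with hk₀
        have hk₀mem := Finset.min'_mem _ hne'
        rw [Finset.mem_filter] at hk₀mem
        refine Set.mem_biUnion hk₀mem.1 ?_
        refine ⟨⟨ht, hk₀mem.2⟩, ?_⟩
        intro hcon
        obtain ⟨j, hj1, hj2⟩ := Set.mem_iUnion₂.mp hcon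
        rw [Finset.mem_filter] at hj1
        have hle : k₀ ≤ j := Finset.min'_le _ j (Finset.mem_filter.mpr ⟨hj1.1, hj2⟩)
        omega
      · exact Set.iUnion₂_subset fun k _ => hSsubB n k
    set y : ℕ → E := fun n => ∑ k ∈ G, (μ (S n k)).toReal • D k with hy
    have hconst_int : ∀ (x : E) (s : Set ℝ), IntegrableOn (fun _ => x) s μ := fun x s =>
      integrableOn_const (measure_lt_top _ _).ne
    have hpiece : ∀ n, ∀ k ∈ G, ‖(∫ t in S n k, g n t ∂μ) - (μ (S n k)).toReal • D k‖
        ≤ ∫ t in S n k, (h t + δ) ∂μ := by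
      intro n k _
      have h1 : (∫ t in S n k, g n t ∂μ) - (μ (S n k)).toReal • D k
          = ∫ t in S n k, (g n t - D k) ∂μ := by
        rw [integral_sub ((hgint n).integrableOn) (hconst_int (D k) _), setIntegral_const, measureReal_def]
      rw [h1]
      refine le_trans (norm_integral_le_integral_norm _) ?_
      refine setIntegral_mono_on ?_ ?_ (hSmeas n k) ?_
      · exact ((hgint n).integrableOn.sub (hconst_int (D k) _)).norm
      · exact (hhint.add (integrable_const δ)).integrableOn
      · intro t ht
        exact le_of_lt (hSsubU n k ht)
    have hsum : ∀ n, ‖(∫ t in B, g n t ∂μ) - y n‖ ≤ ∫ t in B, (h t + δ) ∂μ := by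
      intro n
      have hB1 : (∫ t in B, g n t ∂μ) = ∑ k ∈ G, ∫ t in S n k, g n t ∂μ := by
        rw [hScover n]
        exact integral_biUnion_finset G (fun k _ => hSmeas n k) (hSdisj n)
          (fun k _ => (hgint n).integrableOn)
      have hB2 : (∫ t in B, (h t + δ) ∂μ) = ∑ k ∈ G, ∫ t in S n k, (h t + δ) ∂μ := by
        rw [hScover n]
        exact integral_biUnion_finset G (fun k _ => hSmeas n k) (hSdisj n)
          (fun k _ => (hhint.add (integrable_const δ)).integrableOn)
      rw [hB1, hB2, hy, ← Finset.sum_sub_distrib]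
      exact le_trans (norm_sum_le _ _) (Finset.sum_le_sum (hpiece n))
    have hBbound : (∫ t in B, (h t + δ) ∂μ) ≤ I + δ * l := by
      have h1 : (∫ t in B, (h t + δ) ∂μ) ≤ ∫ t, (h t + δ) ∂μ :=
        setIntegral_le_integral (hhint.add (integrable_const δ))
          (Eventually.of_forall fun t => by have := hh0 t; positivity)
      have h2 : (∫ t, (h t + δ) ∂μ) = I + δ * l := by
        rw [integral_add hhint (integrable_const δ), integral_const, smul_eq_mul, measureReal_def, hμuniv]
        ring
      linarith
    have hcomplB : ∀ n, ‖∫ t in Bᶜ, g n t ∂μ‖ < δ := by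
      intro n
      refine lt_of_le_of_lt ?_ hcompl
      refine le_trans (norm_integral_le_integral_norm _) ?_
      refine integral_mono_ae ((hgint n).norm.integrableOn) (hcintμ.integrableOn) ?_
      exact ae_restrict_of_ae (hgood.mono fun t ht => ht.1 n)
    -- the approximations live in a compact set
    set K : Set E := (fun a : ℕ → ℝ => ∑ k ∈ G, a k • D k) ''
      (Set.pi Set.univ (fun _ : ℕ => Set.Icc (0:ℝ) l)) with hK
    have hKcomp : IsCompact K := by
      refine IsCompact.image (isCompact_univ_pi fun _ => isCompact_Icc) ?_
      exact continuous_finset_sum _ fun k _ => (continuous_apply k).smul continuous_const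
    have hyK : ∀ n, y n ∈ K := by
      intro n
      refine ⟨fun k => (μ (S n k)).toReal, ?_, rfl⟩
      intro k _
      constructor
      · exact ENNReal.toReal_nonneg
      · have h1 : μ (S n k) ≤ μ Set.univ := measure_mono (Set.subset_univ _)
        have h2 := ENNReal.toReal_mono (measure_ne_top μ _) h1
        rwa [hμuniv] at h2
    obtain ⟨sC, hsCfin, hsCcover⟩ :=
      (Metric.totallyBounded_iff.mp hKcomp.totallyBounded) δ hδ
    refine ⟨hsCfin.toFinset, ?_⟩
    rintro x ⟨n, rfl⟩
    obtain ⟨z, hz1, hz2⟩ := Set.mem_iUnion₂.mp (hsCcover (hyK n))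
    refine Set.mem_biUnion ((Set.Finite.mem_toFinset hsCfin).mpr hz1) ?_
    rw [Metric.mem_ball, dist_eq_norm]
    have hdecomp : ((∫ t, g n t ∂μ) : E) - z = ((∫ t in B, g n t ∂μ) - y n)
        + (∫ t in Bᶜ, g n t ∂μ) + (y n - z) := by
      rw [← integral_add_compl hBmeas (hgint n)]
      abel
    rw [hdecomp]
    have hz : ‖y n - z‖ < δ := by
      rw [← dist_eq_norm]
      exact Metric.mem_ball.mp hz2
    have hstep : ‖((∫ t in B, g n t ∂μ) - y n) + (∫ t in Bᶜ, g n t ∂μ) + (y n - z)‖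
        ≤ ‖(∫ t in B, g n t ∂μ) - y n‖ + ‖∫ t in Bᶜ, g n t ∂μ‖ + ‖y n - z‖ :=
      le_trans (norm_add_le _ _) (by gcongr; exact norm_add_le _ _)
    have := hsum n
    have := hcomplB n
    have := hBbound
    calc ‖((∫ t in B, g n t ∂μ) - y n) + (∫ t in Bᶜ, g n t ∂μ) + (y n - z)‖
        ≤ ‖(∫ t in B, g n t ∂μ) - y n‖ + ‖∫ t in Bᶜ, g n t ∂μ‖ + ‖y n - z‖ := hstep
      _ < (I + δ * l) + δ + δ := by
          have h1 : ‖(∫ t in B, g n t ∂μ) - y n‖ ≤ I + δ * l := le_trans (hsum n) hBbound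
          have h2 := hcomplB n
          linarith
      _ ≤ I + ε := by nlinarith
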